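/- Under the stated flatness and periodicity assumptions, if s ∈ k^n has all its coordinates in the prime field F_p (equivalently s_j^p = s_j for all j), then every p-curvature matrix C_i(s) ∈ Mat_N(k[x_1,…,x_r]) is nilpotent. -/

import Mathlib

open MvPolynomial Matrix

/-- The connection operator `∇_i(s)` of the pencil with coefficient matrices `B`,
acting on `N`-tuples of polynomials with coefficients in a commutative `k`-algebra `S`:
`∇_i(s) v = ∂_i v − (Σ_j s_j • B_{ij}) · v`. -/
noncomputable def connOp {k : Type} [CommRing k] {N r n : ℕ}
    (B : Fin r → Fin n → Matrix (Fin N) (Fin N) (MvPolynomial (Fin r) k))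
    (S : Type) [CommRing S] [Algebra k S] (s : Fin n → S) (i : Fin r)
    (v : Fin N → MvPolynomial (Fin r) S) : Fin N → MvPolynomial (Fin r) S :=
  fun a => pderiv i (v a) -
    ((∑ j, (MvPolynomial.C (s j) : MvPolynomial (Fin r) S) • (B i j).map (MvPolynomial.map (algebraMap k S))) *ᵥ v) a

namespace PPencilAux

/-! ### Generic auxiliary lemmas -/

/-- iterate of an additive map is additive -/
lemma iter_add {M : Type*} [AddCommMonoid M] (g : M → M)
    (hadd : ∀ x y, g (x + y) = g x + g y) (m : ℕ) (x y : M) :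
    g^[m] (x + y) = g^[m] x + g^[m] y := by
  induction m generalizing x y with
  | zero => simp
  | succ m ih => simp only [Function.iterate_succ_apply, hadd, ih]

section PderivP

variable {S : Type} [CommRing S] {N r : ℕ}

/-- multiplication by a polynomial as an additive endomorphism -/
noncomputable def muE (f : MvPolynomial (Fin r) S) :
    AddMonoid.End (Fin N → MvPolynomial (Fin r) S) :=
  AddMonoidHom.mk' (fun v => f • v) (fun v w => smul_add f v w)

lemma muE_apply (f : MvPolynomial (Fin r) S) (v : Fin N → MvPolynomial (Fin r) S) :
    muE (N := N) f v = f • v := rfl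

lemma psmul_zero_of_cast {p : ℕ} (hpS : (p : S) = 0)
    (x : AddMonoid.End (Fin N → MvPolynomial (Fin r) S)) : p • x = 0 := by
  refine AddMonoidHom.ext fun v => ?_
  show (p • x) v = 0
  show p • (x v) = 0
  funext a
  show p • (x v a) = 0
  rw [nsmul_eq_mul]
  have : ((p : ℕ) : MvPolynomial (Fin r) S) = MvPolynomial.C ((p : ℕ) : S) := by
    simp
  rw [this, hpS, map_zero, zero_mul]

lemma pderiv_iterate_monomial (i : Fin r) (m : ℕ) (d : (Fin r) →₀ ℕ) (c : S) :
    (⇑(pderiv i))^[m] (monomial d c)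
      = monomial (d - Finsupp.single i m) (c * ((d i).descFactorial m : ℕ)) := by
  induction m with
  | zero => simp
  | succ m ih =>
      rw [Function.iterate_succ_apply', ih, pderiv_monomial]
      rw [Finsupp.tsub_apply, Finsupp.single_eq_same]
      congr 1
      · rw [tsub_tsub, ← Finsupp.single_add]
      · rw [Nat.descFactorial_succ, mul_assoc, ← Nat.cast_mul, mul_comm (d i - m)]

lemma pderiv_iterate_p {p : ℕ} (hp1 : 1 ≤ p) (hpS : (p : S) = 0) (i : Fin r)
    (f : MvPolynomial (Fin r) S) : (⇑(pderiv i))^[p] f = 0 := by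
  induction f using MvPolynomial.induction_on' with
  | monomial d c =>
      rw [pderiv_iterate_monomial]
      obtain ⟨t, ht⟩ : (p : ℕ) ∣ (d i).descFactorial p :=
        dvd_trans (Nat.dvd_factorial hp1 le_rfl) (Nat.factorial_dvd_descFactorial _ _)
      rw [ht, Nat.cast_mul, hpS, zero_mul, mul_zero, monomial_zero]
  | add f g hf hg =>
      rw [iter_add _ (fun x y => map_add _ x y), hf, hg, add_zero]

end PderivP

/-! ### The connection operator and its `p`-th iterate -/

section Conn

variable {k : Type} [CommRing k] {N r n : ℕ}
  (B : Fin r → Fin n → Matrix (Fin N) (Fin N) (MvPolynomial (Fin r) k))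
  (S : Type) [CommRing S] [Algebra k S]

/-- the matrix of the pencil -/
noncomputable def Mmat (s : Fin n → S) (i : Fin r) :
    Matrix (Fin N) (Fin N) (MvPolynomial (Fin r) S) :=
  ∑ j, (MvPolynomial.C (s j) : MvPolynomial (Fin r) S) •
    (B i j).map (MvPolynomial.map (algebraMap k S))

lemma connOp_def (s : Fin n → S) (i : Fin r) (v : Fin N → MvPolynomial (Fin r) S) :
    connOp B S s i v = fun a => pderiv i (v a) - (Mmat B S s i *ᵥ v) a := rfl

lemma connOp_add (s : Fin n → S) (i : Fin r) (v w : Fin N → MvPolynomial (Fin r) S) :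
    connOp B S s i (v + w) = connOp B S s i v + connOp B S s i w := by
  funext a
  simp only [connOp_def, Pi.add_apply, map_add, mulVec_add]
  ring

lemma connOp_smul (s : Fin n → S) (i : Fin r) (f : MvPolynomial (Fin r) S)
    (v : Fin N → MvPolynomial (Fin r) S) :
    connOp B S s i (f • v) = f • connOp B S s i v + (pderiv i f) • v := by
  funext a
  simp only [connOp_def, Pi.add_apply, Pi.smul_apply, mulVec_smul, smul_eq_mul,
    pderiv_mul]
  ring

/-- the connection operator as an additive endomorphism -/
noncomputable def LopE (s : Fin n → S) (i : Fin r) :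
    AddMonoid.End (Fin N → MvPolynomial (Fin r) S) :=
  AddMonoidHom.mk' (connOp B S s i) (connOp_add B S s i)


lemma LopE_pow_apply (s : Fin n → S) (i : Fin r) (m : ℕ) (v : Fin N → MvPolynomial (Fin r) S) :
    ((LopE B S s i) ^ m) v = (connOp B S s i)^[m] v := by
  induction m generalizing v with
  | zero => rfl
  | succ m ih =>
      rw [pow_succ, Function.iterate_succ_apply]
      exact ih _

lemma LopE_mul_muE (s : Fin n → S) (i : Fin r) (f : MvPolynomial (Fin r) S) :
    LopE B S s i * muE f = muE f * LopE B S s i + muE (pderiv i f) := by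
  refine AddMonoidHom.ext fun v => ?_
  show connOp B S s i (f • v) = f • connOp B S s i v + (pderiv i f) • v
  exact connOp_smul B S s i f v


/-- the operator binomial formula -/
lemma LopE_pow_mul_muE (s : Fin n → S) (i : Fin r) (f : MvPolynomial (Fin r) S) (m : ℕ) :
    (LopE B S s i) ^ m * muE f
      = ∑ t ∈ Finset.range (m + 1),
          m.choose t • (muE ((⇑(pderiv i))^[t] f) * (LopE B S s i) ^ (m - t)) := by
  set L := LopE B S s i with hL
  set D : MvPolynomial (Fin r) S → MvPolynomial (Fin r) S := (⇑(pderiv i) : MvPolynomial (Fin r) S → MvPolynomial (Fin r) S) with hD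
  induction m with
  | zero => simp
  | succ m ih =>
      have key : L ^ (m+1) * muE f
          = ∑ t ∈ Finset.range (m + 1),
              m.choose t • (muE (D^[t] f) * L ^ (m + 1 - t))
            + ∑ t ∈ Finset.range (m + 1),
              m.choose t • (muE (D^[t+1] f) * L ^ (m - t)) := by
        rw [pow_succ', mul_assoc, ih, Finset.mul_sum, ← Finset.sum_add_distrib]
        refine Finset.sum_congr rfl fun t ht => ?_
        rw [Finset.mem_range, Nat.lt_succ_iff] at ht
        rw [mul_smul_comm, ← mul_assoc, LopE_mul_muE, add_mul, nsmul_add]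
        congr 1
        · rw [mul_assoc, ← pow_succ']
          congr 3
          omega
        · rw [Function.iterate_succ_apply']
      rw [key]
      have hSa : ∑ t ∈ Finset.range (m + 1),
            m.choose t • (muE (D^[t] f) * L ^ (m + 1 - t))
          = ∑ t ∈ Finset.range (m + 1),
              m.choose (t+1) • (muE (D^[t+1] f) * L ^ (m - t))
            + m.choose 0 • (muE (D^[0] f) * L ^ (m + 1 - 0)) := by
        have e2 : ∑ t ∈ Finset.range (m + 2),
              m.choose t • (muE (D^[t] f) * L ^ (m + 1 - t))
            = ∑ t ∈ Finset.range (m + 1),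
              m.choose t • (muE (D^[t] f) * L ^ (m + 1 - t)) := by
          rw [Finset.sum_range_succ]
          simp
        rw [← e2, Finset.sum_range_succ'
          (fun t => m.choose t • (muE (D^[t] f) * L ^ (m + 1 - t))) (m+1)]
        simp only [Nat.succ_sub_succ]
      rw [hSa]
      have hRHS : ∑ t ∈ Finset.range (m + 2),
            (m+1).choose t • (muE (D^[t] f) * L ^ (m + 1 - t))
          = (∑ t ∈ Finset.range (m + 1),
              m.choose t • (muE (D^[t+1] f) * L ^ (m - t))
            + ∑ t ∈ Finset.range (m + 1),
              m.choose (t+1) • (muE (D^[t+1] f) * L ^ (m - t)))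
            + (m+1).choose 0 • (muE (D^[0] f) * L ^ (m + 1 - 0)) := by
        rw [Finset.sum_range_succ'
          (fun t => (m+1).choose t • (muE (D^[t] f) * L ^ (m + 1 - t))) (m+1)]
        congr 1
        rw [← Finset.sum_add_distrib]
        refine Finset.sum_congr rfl fun t ht => ?_
        rw [Nat.succ_sub_succ, Nat.choose_succ_succ, add_smul]
      rw [hRHS]
      simp only [Nat.choose_zero_right, one_smul]
      abel

lemma muE_zero : muE (N := N) (0 : MvPolynomial (Fin r) S) = 0 := by
  refine AddMonoidHom.ext fun v => ?_
  show (0 : MvPolynomial (Fin r) S) • v = 0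
  simp

lemma LopE_pow_p_comm {p : ℕ} [hp : Fact p.Prime] (hpS : (p : S) = 0)
    (s : Fin n → S) (i : Fin r) (f : MvPolynomial (Fin r) S) :
    (LopE B S s i) ^ p * muE f = muE f * (LopE B S s i) ^ p := by
  rw [LopE_pow_mul_muE]
  rw [Finset.sum_eq_single 0]
  · simp
  · intro t ht hne
    rw [Finset.mem_range, Nat.lt_succ_iff] at ht
    rcases eq_or_lt_of_le ht with h | h
    · rw [h, pderiv_iterate_p hp.out.one_lt.le hpS, muE_zero, zero_mul, smul_zero]
    · obtain ⟨c, hc⟩ := Nat.Prime.dvd_choose_self hp.out hne h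
      rw [hc, mul_comm, mul_smul, psmul_zero_of_cast hpS, smul_zero]
  · intro h
    exact absurd (Finset.mem_range.mpr (Nat.succ_pos p)) h

/-- the matrix of the `p`-th iterate of the connection operator -/
noncomputable def Pmat (p : ℕ) (s : Fin n → S) (i : Fin r) :
    Matrix (Fin N) (Fin N) (MvPolynomial (Fin r) S) :=
  Matrix.of fun a b => (connOp B S s i)^[p] (Pi.single b (1 : MvPolynomial (Fin r) S)) a

lemma iterate_p_eq_mulVec {p : ℕ} [hp : Fact p.Prime] (hpS : (p : S) = 0)
    (s : Fin n → S) (i : Fin r) (v : Fin N → MvPolynomial (Fin r) S) :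
    (connOp B S s i)^[p] v = Pmat B S p s i *ᵥ v := by
  have hv : v = ∑ b, (v b) • (Pi.single b 1 : Fin N → MvPolynomial (Fin r) S) := by
    funext a
    rw [Finset.sum_apply]
    simp [Pi.single_apply]
  calc (connOp B S s i)^[p] v = ((LopE B S s i) ^ p) v := (LopE_pow_apply B S s i p v).symm
    _ = ∑ b, ((LopE B S s i) ^ p) ((v b) • (Pi.single b 1 : Fin N → MvPolynomial (Fin r) S)) := by
        conv_lhs => rw [hv]
        rw [map_sum]
    _ = ∑ b, (v b) • (((LopE B S s i) ^ p) (Pi.single b 1 : Fin N → MvPolynomial (Fin r) S)) := by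
        refine Finset.sum_congr rfl fun b _ => ?_
        have h := congrArg (fun (g : AddMonoid.End (Fin N → MvPolynomial (Fin r) S)) =>
          g (Pi.single b 1 : Fin N → MvPolynomial (Fin r) S))
          (LopE_pow_p_comm B S hpS s i (v b))
        exact h
    _ = Pmat B S p s i *ᵥ v := by
        funext a
        rw [Finset.sum_apply]
        show _ = ∑ b, Pmat B S p s i a b * v b
        refine Finset.sum_congr rfl fun b _ => ?_
        rw [Pi.smul_apply, smul_eq_mul, mul_comm, LopE_pow_apply B S s i p]
        rfl

lemma matrix_eq_of_mulVec_eq {R : Type*} [CommRing R] {m : ℕ}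
    {M M' : Matrix (Fin m) (Fin m) R} (h : ∀ v, M *ᵥ v = M' *ᵥ v) : M = M' := by
  ext a b
  have := congrFun (h (Pi.single b 1)) a
  simpa using this

section BaseChange

variable (T : Type) [CommRing T] [Algebra k T]

lemma Mmat_map (φ : S →+* T) (hφ : φ.comp (algebraMap k S) = algebraMap k T)
    (s : Fin n → S) (i : Fin r) :
    (Mmat B S s i).map (MvPolynomial.map φ) = Mmat B T (fun j => φ (s j)) i := by
  refine Matrix.ext fun a b => ?_
  simp only [Mmat, Matrix.map_apply, Matrix.sum_apply, Matrix.smul_apply, smul_eq_mul,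
    map_sum, _root_.map_mul, MvPolynomial.map_C, MvPolynomial.map_map, hφ]

lemma connOp_map (φ : S →+* T) (hφ : φ.comp (algebraMap k S) = algebraMap k T)
    (s : Fin n → S) (i : Fin r) (v : Fin N → MvPolynomial (Fin r) S) :
    (fun a => MvPolynomial.map φ (connOp B S s i v a))
      = connOp B T (fun j => φ (s j)) i (fun a => MvPolynomial.map φ (v a)) := by
  funext a
  rw [connOp_def, connOp_def, map_sub]
  congr 1
  · exact (pderiv_map (φ := φ)).symm
  · show MvPolynomial.map φ ((Mmat B S s i *ᵥ v) a) = (Mmat B T (fun j => φ (s j)) i *ᵥ _) a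
    rw [← Mmat_map B S T φ hφ s i]
    simp only [Matrix.mulVec, dotProduct, map_sum, _root_.map_mul, Matrix.map_apply]

lemma connOp_iterate_map (φ : S →+* T) (hφ : φ.comp (algebraMap k S) = algebraMap k T)
    (s : Fin n → S) (i : Fin r) (m : ℕ) (v : Fin N → MvPolynomial (Fin r) S) :
    (fun a => MvPolynomial.map φ ((connOp B S s i)^[m] v a))
      = (connOp B T (fun j => φ (s j)) i)^[m] (fun a => MvPolynomial.map φ (v a)) := by
  induction m generalizing v with
  | zero => rfl
  | succ m ih =>
      rw [Function.iterate_succ_apply, Function.iterate_succ_apply, ← connOp_map B S T φ hφ]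
      exact ih _

lemma Pmat_map (p : ℕ) (φ : S →+* T) (hφ : φ.comp (algebraMap k S) = algebraMap k T)
    (s : Fin n → S) (i : Fin r) :
    Pmat B T p (fun j => φ (s j)) i = (Pmat B S p s i).map (MvPolynomial.map φ) := by
  refine Matrix.ext fun a b => ?_
  show (connOp B T (fun j => φ (s j)) i)^[p] (Pi.single b 1) a
      = MvPolynomial.map φ ((connOp B S s i)^[p] (Pi.single b 1) a)
  have hsingle : (fun c => MvPolynomial.map φ ((Pi.single b 1 : Fin N → MvPolynomial (Fin r) S) c))
      = (Pi.single b 1 : Fin N → MvPolynomial (Fin r) T) := by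
    funext c
    rcases eq_or_ne c b with h | h
    · subst h; simp
    · simp [Pi.single_eq_of_ne h]
  have h2 := congrFun (connOp_iterate_map B S T φ hφ s i p (Pi.single b 1)) a
  rw [hsingle] at h2
  exact h2.symm

end BaseChange

end Conn

/-- characteristic polynomial is invariant under conjugation -/
lemma charpoly_units_conj {R : Type*} [CommRing R] {m : ℕ}
    (U : (Matrix (Fin m) (Fin m) R)ˣ) (M : Matrix (Fin m) (Fin m) R) :
    ((U : Matrix (Fin m) (Fin m) R) * M
      * ((U⁻¹ : (Matrix (Fin m) (Fin m) R)ˣ) : Matrix (Fin m) (Fin m) R)).charpoly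
      = M.charpoly := by
  let ψ : Matrix (Fin m) (Fin m) R →+* Matrix (Fin m) (Fin m) (Polynomial R) :=
    (Polynomial.C : R →+* Polynomial R).mapMatrix
  set U1 : Matrix (Fin m) (Fin m) (Polynomial R) := ψ (U : Matrix (Fin m) (Fin m) R) with hU1
  set U2 : Matrix (Fin m) (Fin m) (Polynomial R) :=
    ψ ((U⁻¹ : (Matrix (Fin m) (Fin m) R)ˣ) : Matrix (Fin m) (Fin m) R) with hU2
  have hU12 : U1 * U2 = 1 := by
    rw [hU1, hU2, ← _root_.map_mul ψ, Units.mul_inv, _root_.map_one ψ]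
  have hconj : charmatrix ((U : Matrix (Fin m) (Fin m) R) * M
      * ((U⁻¹ : (Matrix (Fin m) (Fin m) R)ˣ) : Matrix (Fin m) (Fin m) R))
      = U1 * charmatrix M * U2 := by
    unfold charmatrix
    rw [mul_sub, sub_mul]
    congr 1
    · have h1 : U1 * Matrix.scalar (Fin m) (Polynomial.X : Polynomial R)
          = Matrix.scalar (Fin m) (Polynomial.X : Polynomial R) * U1 :=
        (Matrix.scalar_commute (Polynomial.X : Polynomial R)
          (fun r' => Commute.all _ _) U1).symm
      rw [h1, mul_assoc, hU12, mul_one]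
    · rw [_root_.map_mul (Polynomial.C : R →+* Polynomial R).mapMatrix,
        _root_.map_mul (Polynomial.C : R →+* Polynomial R).mapMatrix]
  rw [Matrix.charpoly, Matrix.charpoly, hconj, Matrix.det_mul, Matrix.det_mul]
  have hdet : U1.det * U2.det = 1 := by rw [← Matrix.det_mul, hU12, Matrix.det_one]
  calc U1.det * (charmatrix M).det * U2.det
      = (charmatrix M).det * (U1.det * U2.det) := by ring
    _ = (charmatrix M).det := by rw [hdet, mul_one]

/-- iterates intertwine -/
lemma iterate_intertwine {α β : Type*} (g : α → α) (h : β → β) (e : β → α)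
    (hcomm : ∀ x, g (e x) = e (h x)) (m : ℕ) (x : β) :
    g^[m] (e x) = e (h^[m] x) := by
  induction m generalizing x with
  | zero => rfl
  | succ m ih => rw [Function.iterate_succ_apply, Function.iterate_succ_apply, hcomm]; exact ih _

end PPencilAux

namespace PPencilAux

/-- elements fixed by `x ^ p = x` in a field of characteristic `p` are natural numbers -/
lemma exists_nat_of_pow_p {p : ℕ} [Fact p.Prime] {k : Type} [Field k] [CharP k p]
    (c : k) (hc : c ^ p = c) : ∃ m : ℕ, c = (m : k) := by
  classical
  haveI : NeZero p := ⟨(Fact.out : p.Prime).ne_zero⟩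
  let f : ZMod p →+* k := ZMod.castHom (dvd_refl p) k
  let P : Polynomial k := Polynomial.X ^ p - Polynomial.X
  have hp1 : 1 < p := (Fact.out : p.Prime).one_lt
  have hPne : P ≠ 0 := by
    intro h
    have hcoeff : P.coeff p = 1 := by
      simp only [P, Polynomial.coeff_sub, Polynomial.coeff_X_pow_self, Polynomial.coeff_X]
      rw [if_neg (by omega)]
      ring
    rw [h] at hcoeff
    simp at hcoeff
  have hroots : ∀ a : ZMod p, f a ∈ P.roots.toFinset := by
    intro a
    rw [Multiset.mem_toFinset, Polynomial.mem_roots hPne]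
    show Polynomial.IsRoot P (f a)
    unfold P
    simp only [Polynomial.IsRoot.def, Polynomial.eval_sub, Polynomial.eval_pow,
      Polynomial.eval_X]
    rw [← map_pow, ZMod.pow_card, sub_self]
  have hsub : (Finset.univ.image f) ⊆ P.roots.toFinset :=
    Finset.image_subset_iff.mpr fun a _ => hroots a
  have hcard1 : (Finset.univ.image f).card = p := by
    rw [Finset.card_image_of_injective _ f.injective, Finset.card_univ, ZMod.card]
  have hcard2 : P.roots.toFinset.card ≤ p := by
    refine le_trans (Multiset.toFinset_card_le _) (le_trans (Polynomial.card_roots' P) ?_)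
    refine le_trans (Polynomial.natDegree_sub_le _ _) ?_
    simp [Polynomial.natDegree_X_pow, Polynomial.natDegree_X]
    omega
  have heq : P.roots.toFinset = Finset.univ.image f :=
    (Finset.eq_of_subset_of_card_le hsub (by omega)).symm
  have hcmem : c ∈ P.roots.toFinset := by
    rw [Multiset.mem_toFinset, Polynomial.mem_roots hPne]
    show Polynomial.IsRoot P c
    simp only [P, Polynomial.IsRoot.def, Polynomial.eval_sub, Polynomial.eval_pow,
      Polynomial.eval_X]
    rw [hc, sub_self]
  rw [heq, Finset.mem_image] at hcmem
  obtain ⟨a, _, ha⟩ := hcmem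
  refine ⟨a.val, ?_⟩
  rw [← ha]
  show f a = ((a.val : ℕ) : k)
  rw [ZMod.natCast_val a]
  rfl

/-- charpoly of the zero matrix -/
lemma charpoly_zero_mat {R : Type*} [CommRing R] {m : ℕ} :
    (0 : Matrix (Fin m) (Fin m) R).charpoly = Polynomial.X ^ m := by
  rw [Matrix.charpoly, charmatrix, map_zero, sub_zero]
  show Matrix.det (Matrix.diagonal _) = _
  rw [Matrix.det_diagonal]
  simp

end PPencilAux

theorem pcurvature_nilpotent_of_periodic_pencil
    {p : ℕ} [Fact p.Prime] {k : Type} [Field k] [IsAlgClosed k] [CharP k p]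
    {N r n : ℕ} (hr : 1 ≤ r) (hn : 1 ≤ n)
    (B : Fin r → Fin n → Matrix (Fin N) (Fin N) (MvPolynomial (Fin r) k))
    -- `F = k(s_1,…,s_n)`, the rational function field, with `σ` the tuple of variables
    (F : Type) [Field F] [Algebra k F]
    [Algebra (MvPolynomial (Fin n) k) F] [IsScalarTower k (MvPolynomial (Fin n) k) F]
    [IsFractionRing (MvPolynomial (Fin n) k) F]
    (σ : Fin n → F) (hσ : ∀ j, σ j = algebraMap (MvPolynomial (Fin n) k) F (X j))
    -- flatness
    (hflat : ∀ (i l : Fin r) (v : Fin N → MvPolynomial (Fin r) F),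
      connOp B F σ i (connOp B F σ l v) = connOp B F σ l (connOp B F σ i v))
    -- periodicity: shift operators
    (hper : ∀ j : Fin n, ∃ A : Matrix (Fin N) (Fin N) (MvPolynomial (Fin r) F),
      IsUnit A ∧ ∀ (i : Fin r) (v : Fin N → MvPolynomial (Fin r) F),
        connOp B F (fun j' => σ j' + if j' = j then 1 else 0) i (A *ᵥ v)
          = A *ᵥ connOp B F σ i v)
    -- the p-curvature matrices
    (Cmat : (Fin n → k) → Fin r → Matrix (Fin N) (Fin N) (MvPolynomial (Fin r) k))
    (hC : ∀ (s : Fin n → k) (i : Fin r) (v : Fin N → MvPolynomial (Fin r) k),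
      (connOp B k s i)^[p] v = Cmat s i *ᵥ v)
    (s : Fin n → k) (hs : ∀ j, s j ^ p = s j) (i : Fin r) :
    IsNilpotent (Cmat s i) := by
  classical
  open PPencilAux in
  -- `p = 0` in every `k`-algebra
  have hpcast : ∀ (S : Type) [CommRing S] [Algebra k S], ((p : ℕ) : S) = 0 := by
    intro S _ _
    rw [← map_natCast (algebraMap k S) p, CharP.cast_eq_zero k p, map_zero]
  -- Step 1 : `Cmat` is the universal matrix specialized
  have hCP : ∀ (t : Fin n → k) (i' : Fin r), Cmat t i' = PPencilAux.Pmat B k p t i' := by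
    intro t i'
    refine PPencilAux.matrix_eq_of_mulVec_eq fun v => ?_
    rw [← hC t i' v, PPencilAux.iterate_p_eq_mulVec B k (hpcast k) t i' v]
  -- the universal matrix
  set Q : Matrix (Fin N) (Fin N) (MvPolynomial (Fin r) (MvPolynomial (Fin n) k)) :=
    PPencilAux.Pmat B (MvPolynomial (Fin n) k) p (fun j => X j) i with hQ
  set φF : MvPolynomial (Fin n) k →+* F := algebraMap (MvPolynomial (Fin n) k) F with hφFdef
  have hφF : φF.comp (algebraMap k (MvPolynomial (Fin n) k)) = algebraMap k F :=
    (IsScalarTower.algebraMap_eq k (MvPolynomial (Fin n) k) F).symm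
  -- the shift ring homomorphisms
  set ψ : Fin n → (MvPolynomial (Fin n) k →+* MvPolynomial (Fin n) k) :=
    fun j => (MvPolynomial.aeval
      (fun j' => (X j' : MvPolynomial (Fin n) k) + if j' = j then 1 else 0) :
        MvPolynomial (Fin n) k →ₐ[k] MvPolynomial (Fin n) k).toRingHom with hψdef
  have hψk : ∀ j, (ψ j).comp (algebraMap k (MvPolynomial (Fin n) k))
      = algebraMap k (MvPolynomial (Fin n) k) := by
    intro j
    refine RingHom.ext fun c => ?_
    simp [hψdef, MvPolynomial.algebraMap_eq]
  have hψX : ∀ j j', (ψ j) (X j')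
      = (X j' : MvPolynomial (Fin n) k) + if j' = j then 1 else 0 := by
    intro j j'
    simp [hψdef]
  -- Step 2 : universal shift invariance of the characteristic polynomial
  have hshift : ∀ j : Fin n, (Q.map (MvPolynomial.map (ψ j))).charpoly = Q.charpoly := by
    intro j
    obtain ⟨A, hAu, hA⟩ := hper j
    obtain ⟨u, hu⟩ := hAu
    subst hu
    -- conjugation over F
    have hFconj : PPencilAux.Pmat B F p (fun j' => σ j' + if j' = j then 1 else 0) i
          * (u : Matrix (Fin N) (Fin N) (MvPolynomial (Fin r) F))
        = (u : Matrix (Fin N) (Fin N) (MvPolynomial (Fin r) F))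
          * PPencilAux.Pmat B F p σ i := by
      refine PPencilAux.matrix_eq_of_mulVec_eq fun v => ?_
      have hiter := PPencilAux.iterate_intertwine
        (connOp B F (fun j' => σ j' + if j' = j then 1 else 0) i) (connOp B F σ i)
        (fun w => (u : Matrix (Fin N) (Fin N) (MvPolynomial (Fin r) F)) *ᵥ w)
        (fun w => hA i w) p v
      rw [PPencilAux.iterate_p_eq_mulVec B F (hpcast F) _ i,
        PPencilAux.iterate_p_eq_mulVec B F (hpcast F) σ i] at hiter
      rw [Matrix.mulVec_mulVec, Matrix.mulVec_mulVec] at hiter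
      exact hiter
    have hconj2 : PPencilAux.Pmat B F p (fun j' => σ j' + if j' = j then 1 else 0) i
        = (u : Matrix (Fin N) (Fin N) (MvPolynomial (Fin r) F))
          * PPencilAux.Pmat B F p σ i
          * ((u⁻¹ : (Matrix (Fin N) (Fin N) (MvPolynomial (Fin r) F))ˣ) :
              Matrix (Fin N) (Fin N) (MvPolynomial (Fin r) F)) := by
      calc PPencilAux.Pmat B F p (fun j' => σ j' + if j' = j then 1 else 0) i
          = PPencilAux.Pmat B F p (fun j' => σ j' + if j' = j then 1 else 0) i
            * ((u : Matrix (Fin N) (Fin N) (MvPolynomial (Fin r) F))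
              * ((u⁻¹ : (Matrix (Fin N) (Fin N) (MvPolynomial (Fin r) F))ˣ) :
                Matrix (Fin N) (Fin N) (MvPolynomial (Fin r) F))) := by
            rw [Units.mul_inv, mul_one]
        _ = (PPencilAux.Pmat B F p (fun j' => σ j' + if j' = j then 1 else 0) i
              * (u : Matrix (Fin N) (Fin N) (MvPolynomial (Fin r) F)))
            * ((u⁻¹ : (Matrix (Fin N) (Fin N) (MvPolynomial (Fin r) F))ˣ) :
                Matrix (Fin N) (Fin N) (MvPolynomial (Fin r) F)) := by
            rw [mul_assoc]
        _ = _ := by rw [hFconj]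
    have hFcp : (PPencilAux.Pmat B F p (fun j' => σ j' + if j' = j then 1 else 0) i).charpoly
        = (PPencilAux.Pmat B F p σ i).charpoly := by
      rw [hconj2]
      exact PPencilAux.charpoly_units_conj u _
    -- identify the two sides with maps of `Q`
    have hQσ : PPencilAux.Pmat B F p σ i = Q.map (MvPolynomial.map φF) := by
      have h := PPencilAux.Pmat_map B (MvPolynomial (Fin n) k) F p φF hφF (fun j' => X j') i
      have hfun : (fun j' => φF (X j')) = σ := funext fun j' => (hσ j').symm
      rw [hfun] at h
      exact h
    have hcompψ : ((φF.comp (ψ j)).comp (algebraMap k (MvPolynomial (Fin n) k)))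
        = algebraMap k F := by
      rw [RingHom.comp_assoc, hψk j, hφF]
    have hQσ' : PPencilAux.Pmat B F p (fun j' => σ j' + if j' = j then 1 else 0) i
        = (Q.map (MvPolynomial.map (ψ j))).map (MvPolynomial.map φF) := by
      have h := PPencilAux.Pmat_map B (MvPolynomial (Fin n) k) F p (φF.comp (ψ j))
        hcompψ (fun j' => X j') i
      have hfun : (fun j' => (φF.comp (ψ j)) (X j'))
          = (fun j' => σ j' + if j' = j then 1 else 0) := by
        funext j'
        rw [RingHom.comp_apply, hψX j j', map_add, hσ j']
        congr 1
        rcases eq_or_ne j' j with h' | h'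
        · simp [h']
        · simp [h']
      rw [hfun] at h
      have hfcomp : (⇑(MvPolynomial.map φF) ∘ ⇑(MvPolynomial.map (ψ j)))
          = ⇑(MvPolynomial.map (φF.comp (ψ j)) :
              MvPolynomial (Fin r) (MvPolynomial (Fin n) k) →+* MvPolynomial (Fin r) F) :=
        funext fun q => MvPolynomial.map_map (ψ j) φF q
      rw [h, Matrix.map_map, hfcomp, ← hQ]
    -- conclude by injectivity
    have hinj : Function.Injective (MvPolynomial.map φF :
        MvPolynomial (Fin r) (MvPolynomial (Fin n) k) → MvPolynomial (Fin r) F) :=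
      MvPolynomial.map_injective φF (IsFractionRing.injective (MvPolynomial (Fin n) k) F)
    have hkey : ((Q.map (MvPolynomial.map (ψ j))).charpoly).map (MvPolynomial.map φF)
        = (Q.charpoly).map (MvPolynomial.map φF) := by
      rw [← Matrix.charpoly_map, ← Matrix.charpoly_map, ← hQσ, ← hQσ', hFcp]
    exact Polynomial.map_injective _ hinj hkey
  -- Step 3 : shift invariance at `k`-points
  have hev : ∀ t : Fin n → k, (MvPolynomial.eval t).comp
      (algebraMap k (MvPolynomial (Fin n) k)) = algebraMap k k := by
    intro t
    refine RingHom.ext fun c => ?_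
    simp [MvPolynomial.algebraMap_eq]
  have hCmatQ : ∀ t : Fin n → k, Cmat t i = Q.map (MvPolynomial.map (MvPolynomial.eval t)) := by
    intro t
    rw [hCP t i]
    have h := PPencilAux.Pmat_map B (MvPolynomial (Fin n) k) k p (MvPolynomial.eval t)
      (hev t) (fun j' => X j') i
    have hfun : (fun j' => MvPolynomial.eval t (X j')) = t := funext fun j' => by simp
    rw [hfun] at h
    exact h
  have hkshift : ∀ (t : Fin n → k) (j : Fin n),
      (Cmat (fun j' => t j' + if j' = j then 1 else 0) i).charpoly = (Cmat t i).charpoly := by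
    intro t j
    have hcomp' : ((MvPolynomial.eval t).comp (ψ j)).comp
        (algebraMap k (MvPolynomial (Fin n) k)) = algebraMap k k := by
      rw [RingHom.comp_assoc, hψk j, hev t]
    have h2 : Cmat (fun j' => t j' + if j' = j then 1 else 0) i
        = (Q.map (MvPolynomial.map (ψ j))).map (MvPolynomial.map (MvPolynomial.eval t)) := by
      rw [hCP _ i]
      have h := PPencilAux.Pmat_map B (MvPolynomial (Fin n) k) k p
        ((MvPolynomial.eval t).comp (ψ j)) hcomp' (fun j' => X j') i
      have hfun : (fun j' => ((MvPolynomial.eval t).comp (ψ j)) (X j'))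
          = (fun j' => t j' + if j' = j then 1 else 0) := by
        funext j'
        rw [RingHom.comp_apply, hψX j j', map_add]
        simp only [MvPolynomial.eval_X]
        congr 1
        rcases eq_or_ne j' j with h' | h'
        · simp [h']
        · simp [h']
      rw [hfun] at h
      have hfcomp : (⇑(MvPolynomial.map (MvPolynomial.eval t)) ∘ ⇑(MvPolynomial.map (ψ j)))
          = ⇑(MvPolynomial.map ((MvPolynomial.eval t).comp (ψ j)) :
              MvPolynomial (Fin r) (MvPolynomial (Fin n) k) →+* MvPolynomial (Fin r) k) :=
        funext fun q => MvPolynomial.map_map (ψ j) (MvPolynomial.eval t) q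
      rw [h, Matrix.map_map, hfcomp, ← hQ]
    rw [h2, hCmatQ t,
      Matrix.charpoly_map (Q.map (MvPolynomial.map (ψ j))) (MvPolynomial.map (MvPolynomial.eval t)),
      hshift j, ← Matrix.charpoly_map Q (MvPolynomial.map (MvPolynomial.eval t))]
  -- Step 4 : the coordinates of `s` are natural numbers
  have hsnat : ∀ j, ∃ m : ℕ, s j = (m : k) := fun j =>
    PPencilAux.exists_nat_of_pow_p (s j) (hs j)
  choose mvec hmvec using hsnat
  -- Step 5 : descent to zero
  have hdesc : ∀ (M : ℕ) (mm : Fin n → ℕ), (∑ j, mm j) = M →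
      (Cmat (fun j => ((mm j : ℕ) : k)) i).charpoly = (Cmat 0 i).charpoly := by
    intro M
    induction M using Nat.strong_induction_on with
    | _ M ih =>
      intro mm hsum
      by_cases h0 : ∀ j, mm j = 0
      · have hz : (fun j => ((mm j : ℕ) : k)) = (0 : Fin n → k) := by
          funext j
          rw [h0 j]
          simp
        rw [hz]
      · push_neg at h0
        obtain ⟨j, hj⟩ := h0
        set mm' : Fin n → ℕ := Function.update mm j (mm j - 1) with hmm'
        have hfun : (fun j' => ((mm j' : ℕ) : k))
            = (fun j' => ((mm' j' : ℕ) : k) + if j' = j then 1 else 0) := by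
          funext j'
          rcases eq_or_ne j' j with h' | h'
          · subst h'
            rw [if_pos rfl, hmm', Function.update_self]
            have hup : mm j' - 1 + 1 = mm j' := Nat.succ_pred_eq_of_pos (Nat.pos_of_ne_zero hj)
            rw [← hup]
            push_cast
            ring
          · rw [if_neg h', hmm', Function.update_of_ne h', add_zero]
        have hsum' : ∑ j', mm' j' < M := by
          have h1 : ∑ j', mm' j' = (mm j - 1) + ∑ j' ∈ Finset.univ.erase j, mm j' := by
            rw [hmm', Finset.sum_update_of_mem (Finset.mem_univ j), Finset.sdiff_singleton_eq_erase]
          have h2 : ∑ j', mm j' = mm j + ∑ j' ∈ Finset.univ.erase j, mm j' :=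
            (Finset.add_sum_erase Finset.univ mm (Finset.mem_univ j)).symm
          omega
        rw [hfun, hkshift (fun j' => ((mm' j' : ℕ) : k)) j]
        exact ih _ hsum' mm' rfl
  -- Step 6 : `Cmat 0 i = 0`
  have hC0 : Cmat (0 : Fin n → k) i = 0 := by
    refine PPencilAux.matrix_eq_of_mulVec_eq fun v => ?_
    rw [← hC 0 i v, Matrix.zero_mulVec]
    have hconn0 : ∀ w : Fin N → MvPolynomial (Fin r) k,
        connOp B k (0 : Fin n → k) i w = fun a => pderiv i (w a) := by
      intro w
      funext a
      rw [PPencilAux.connOp_def]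
      have hM0 : PPencilAux.Mmat B k (0 : Fin n → k) i = 0 := by
        unfold PPencilAux.Mmat
        simp
      rw [hM0, Matrix.zero_mulVec]
      simp
    have hiter : ∀ (m : ℕ) (w : Fin N → MvPolynomial (Fin r) k),
        (connOp B k (0 : Fin n → k) i)^[m] w = fun a => (⇑(pderiv i))^[m] (w a) := by
      intro m
      induction m with
      | zero => intro w; rfl
      | succ m ihm =>
          intro w
          rw [Function.iterate_succ_apply, hconn0 w, ihm]
          funext a
          rw [Function.iterate_succ_apply]
    rw [hiter p v]
    funext a
    rw [PPencilAux.pderiv_iterate_p (Fact.out : p.Prime).one_lt.le (hpcast k) i (v a)]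
    simp
  -- Step 7 : conclusion
  have hfinal : (Cmat s i).charpoly = Polynomial.X ^ N := by
    have hsfun : s = fun j => ((mvec j : ℕ) : k) := funext fun j => hmvec j
    rw [hsfun, hdesc (∑ j, mvec j) mvec rfl, hC0, PPencilAux.charpoly_zero_mat]
  have hCH := Matrix.aeval_self_charpoly (Cmat s i)
  rw [hfinal] at hCH
  refine ⟨N, ?_⟩
  simpa using hCH
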